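/- Let (W,S) be a Coxeter system of finite rank and w ∈ W an element of order two. Then there is a subset I of S such that the standard parabolic ⟨I⟩ is finite, w is conjugate in W to the longest element w_I of ⟨I⟩, and w_I is central in ⟨I⟩. -/

import Mathlib

namespace RichAux

open List CoxeterSystem

/-- Auxiliary group for Tits' parity argument: pairs of a parity function on `W`
(recording in which reflections a word "reflects" an odd number of times) and a
group element. -/
@[ext]
structure Par (W : Type*) where
  f : W → ZMod 2
  w : W

namespace Par

variable {W : Type*} [Group W]

instance : Mul (Par W) := ⟨fun a b => ⟨fun t => b.f t + a.f (b.w * t * b.w⁻¹), a.w * b.w⟩⟩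
instance : One (Par W) := ⟨⟨fun _ => 0, 1⟩⟩
instance : Inv (Par W) := ⟨fun a => ⟨fun t => a.f (a.w⁻¹ * t * a.w), a.w⁻¹⟩⟩

@[simp] lemma mul_f (a b : Par W) (t : W) : (a * b).f t = b.f t + a.f (b.w * t * b.w⁻¹) := rfl
@[simp] lemma mul_w (a b : Par W) : (a * b).w = a.w * b.w := rfl
@[simp] lemma one_f (t : W) : (1 : Par W).f t = 0 := rfl
@[simp] lemma one_w : (1 : Par W).w = 1 := rfl
@[simp] lemma inv_f (a : Par W) (t : W) : (a⁻¹).f t = a.f (a.w⁻¹ * t * a.w) := rfl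
@[simp] lemma inv_w (a : Par W) : (a⁻¹).w = a.w⁻¹ := rfl

private lemma zmod2_add_self (x : ZMod 2) : x + x = 0 := by revert x; decide

instance : Group (Par W) where
  mul_assoc a b c := by
    refine Par.ext (funext fun t => ?_) ?_
    · simp only [mul_f, mul_w, mul_inv_rev, mul_assoc]
      ring
    · simp [mul_assoc]
  one_mul a := by
    refine Par.ext (funext fun t => ?_) ?_ <;> simp
  mul_one a := by
    refine Par.ext (funext fun t => ?_) ?_ <;> simp
  inv_mul_cancel a := by
    refine Par.ext (funext fun t => ?_) ?_
    · simp only [mul_f, inv_f, inv_w, one_f, mul_assoc, inv_mul_cancel, mul_one,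
        inv_mul_cancel_left]
      exact zmod2_add_self _
    · simp

end Par

end RichAux

namespace CoxeterSystem

open List RichAux

attribute [local instance] Classical.decEq

variable {B W : Type*} [Group W] {M : CoxeterMatrix B} (cs : CoxeterSystem M W)

local prefix:100 "s" => cs.simple
local prefix:100 "π" => cs.wordProd
local prefix:100 "ℓ" => cs.length
local prefix:100 "ris" => cs.rightInvSeq

/-! ### The parity homomorphism -/

open Classical in
/-- The image of a simple reflection in the parity group. -/
noncomputable def sig (i : B) : Par W :=
  ⟨fun t => if t = cs.simple i then 1 else 0, cs.simple i⟩

lemma rightInvSeq_cons (i : B) (ω : List B) :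
    cs.rightInvSeq (i :: ω) = ((π ω)⁻¹ * s i * π ω) :: cs.rightInvSeq ω := rfl

lemma prod_map_sig (ω : List B) :
    (ω.map cs.sig).prod = ⟨fun t => ((ris ω).count t : ZMod 2), π ω⟩ := by
  induction ω with
  | nil =>
      refine Par.ext (funext fun t => ?_) ?_ <;>
        simp [rightInvSeq, wordProd_nil]
  | cons i ω ih =>
      rw [map_cons, prod_cons, ih]
      refine Par.ext (funext fun t => ?_) ?_
      · show ((ris ω).count t : ZMod 2)
            + (if π ω * t * (π ω)⁻¹ = cs.simple i then (1 : ZMod 2) else 0)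
            = ((ris (i :: ω)).count t : ZMod 2)
        have hiff : (π ω * t * (π ω)⁻¹ = cs.simple i) ↔ (t = (π ω)⁻¹ * cs.simple i * π ω) := by
          constructor
          · intro h; rw [← h]; group
          · intro h; rw [h]; group
        rw [rightInvSeq_cons, count_cons]
        push_cast
        simp only [hiff]
        by_cases h : t = (π ω)⁻¹ * cs.simple i * π ω
        · simp [h]
        · simp [h, Ne.symm h]
      · show cs.simple i * π ω = π (i :: ω)
        rw [wordProd_cons]

/-! ### Computation in dihedral situations -/

lemma simple_conj_pow (i i' : B) (n : ℕ) :
    cs.simple i' * (cs.simple i * cs.simple i') ^ n * cs.simple i'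
      = ((cs.simple i * cs.simple i') ^ n)⁻¹ := by
  have key : ∀ x y : W, cs.simple i' * (x * y) * cs.simple i'
      = (cs.simple i' * x * cs.simple i') * (cs.simple i' * y * cs.simple i') := by
    intro x y
    have h := cs.simple_mul_simple_self i'
    calc cs.simple i' * (x * y) * cs.simple i'
        = cs.simple i' * x * (cs.simple i' * cs.simple i') * y * cs.simple i' := by
          rw [h]; group
      _ = (cs.simple i' * x * cs.simple i') * (cs.simple i' * y * cs.simple i') := by group
  induction n with
  | zero => simp
  | succ n ih =>
      rw [pow_succ, key, ih]
      have h1 : cs.simple i' * (cs.simple i * cs.simple i') * cs.simple i'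
          = (cs.simple i * cs.simple i')⁻¹ := by
        rw [mul_inv_rev, inv_simple, inv_simple]
        calc cs.simple i' * (cs.simple i * cs.simple i') * cs.simple i'
            = cs.simple i' * cs.simple i * (cs.simple i' * cs.simple i') := by group
          _ = cs.simple i' * cs.simple i := by rw [simple_mul_simple_self, mul_one]
      rw [h1, ← mul_inv_rev, ← pow_succ', ← pow_succ]

lemma simple_mul_pow (i i' : B) (n : ℕ) :
    cs.simple i' * (cs.simple i * cs.simple i') ^ n
      = ((cs.simple i * cs.simple i') ^ n)⁻¹ * cs.simple i' := by
  have := cs.simple_conj_pow i i' n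
  calc cs.simple i' * (cs.simple i * cs.simple i') ^ n
      = (cs.simple i' * (cs.simple i * cs.simple i') ^ n * cs.simple i') * cs.simple i' := by
        rw [mul_assoc, simple_mul_simple_self, mul_one]
    _ = ((cs.simple i * cs.simple i') ^ n)⁻¹ * cs.simple i' := by rw [this]

/-- The key dihedral computation: conjugating the appropriate simple reflection by the
alternating word gives `s i' * (s i * s i') ^ n`. -/
lemma alt_conj (i i' : B) (n : ℕ) :
    (π (alternatingWord i i' n))⁻¹ * cs.simple (if Even n then i' else i)
        * π (alternatingWord i i' n)
      = cs.simple i' * (cs.simple i * cs.simple i') ^ n := by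
  induction n with
  | zero => simp [alternatingWord]
  | succ n ih =>
      set p := cs.simple i * cs.simple i' with hp
      set E := π (alternatingWord i i' n) with hE'
      have hcomm : ∀ k : ℕ, (p ^ k)⁻¹ * p * p ^ k = p := by
        intro k
        rw [mul_assoc, ((Commute.refl p).pow_right k).eq]
        group
      have key : E⁻¹ * (cs.simple (if Even (n+1) then i' else i)
          * cs.simple (if Even n then i' else i)) * E = p := by
        rcases Nat.even_or_odd n with he | ho
        · have h1 : (if Even n then i' else i) = i' := if_pos he
          have h2 : (if Even (n+1) then i' else i) = i := if_neg (by simp [Nat.even_add_one, he])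
          have hE : E = p ^ (n / 2) := by
            rw [hE', cs.prod_alternatingWord_eq_mul_pow, if_pos he, one_mul, hp]
          rw [h1, h2, hE, ← hp]
          exact hcomm _
        · have hno : ¬ Even n := Nat.not_even_iff_odd.mpr ho
          have h1 : (if Even n then i' else i) = i := if_neg hno
          have h2 : (if Even (n+1) then i' else i) = i' := if_pos (by simp [Nat.even_add_one, hno])
          have hE : E = cs.simple i' * p ^ (n / 2) := by
            rw [hE', cs.prod_alternatingWord_eq_mul_pow, if_neg hno, hp]
          rw [h1, h2, hE]
          calc (cs.simple i' * p ^ (n/2))⁻¹ * (cs.simple i' * cs.simple i)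
                * (cs.simple i' * p ^ (n/2))
              = (p ^ (n/2))⁻¹ * (cs.simple i * cs.simple i') * p ^ (n/2) := by group
            _ = (p ^ (n/2))⁻¹ * p * p ^ (n/2) := by rw [← hp]
            _ = p := hcomm _
      have hmain : (E⁻¹ * cs.simple (if Even n then i' else i) * E)
          * (E⁻¹ * (cs.simple (if Even (n+1) then i' else i)
              * cs.simple (if Even n then i' else i)) * E)
          = cs.simple i' * p ^ n * p := by
        rw [ih, key]
      rw [alternatingWord_succ', wordProd_cons, mul_inv_rev, inv_simple, pow_succ, ← hE']
      rw [← mul_assoc (cs.simple i') (p ^ n) p, ← hmain]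
      group

lemma ris_alternatingWord (i i' : B) (N : ℕ) :
    cs.rightInvSeq (alternatingWord i i' N)
      = ((range N).reverse).map
          (fun n => cs.simple i' * (cs.simple i * cs.simple i') ^ n) := by
  induction N with
  | zero => simp [alternatingWord]
  | succ N ih =>
      rw [alternatingWord_succ', rightInvSeq_cons, ih, range_succ, reverse_append]
      simp only [reverse_cons, reverse_nil, nil_append, singleton_append, map_cons]
      congr 1
      exact cs.alt_conj i i' N

lemma count_ris_braid_even (i i' : B) (t : W) :
    Even ((cs.rightInvSeq (alternatingWord i i' (2 * M i i'))).count t) := by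
  set m := M i i' with hm
  set p := cs.simple i * cs.simple i' with hp
  have hpm : p ^ m = 1 := cs.simple_mul_simple_pow i i'
  rw [cs.ris_alternatingWord]
  rw [show ((range (2*m)).reverse).map (fun n => cs.simple i' * p ^ n)
      = ((range (2*m)).map (fun n => cs.simple i' * p ^ n)).reverse from by
    rw [map_reverse]]
  rw [count_reverse, two_mul, range_add, map_append, count_append]
  have : ∀ n, (fun n => cs.simple i' * p ^ n) (m + n) = (fun n => cs.simple i' * p ^ n) n := by
    intro n
    simp only [pow_add, hpm, one_mul]
  have hmap : (map (fun x => m + x) (range m)).map (fun n => cs.simple i' * p ^ n)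
      = (range m).map (fun n => cs.simple i' * p ^ n) := by
    rw [map_map]
    exact map_congr_left (fun n _ => this n)
  rw [hmap]
  exact ⟨_, rfl⟩

lemma sig_liftable : M.IsLiftable (cs.sig : B → Par W) := by
  intro i i'
  have hexp : ∀ m : ℕ, (cs.sig i * cs.sig i') ^ m
      = ((alternatingWord i i' (2 * m)).map cs.sig).prod := by
    intro m
    induction m with
    | zero => simp [alternatingWord]
    | succ m ih =>
        have halt : alternatingWord i i' (2 * (m+1)) = i :: i' :: alternatingWord i i' (2 * m) := by
          have h1 : 2 * (m + 1) = (2 * m + 1) + 1 := by ring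
          rw [h1, alternatingWord_succ', alternatingWord_succ']
          have : ¬ Even (2 * m + 1) := by simp [Nat.even_add_one]
          rw [if_neg this, if_pos (even_two_mul m)]
        rw [halt, map_cons, map_cons, prod_cons, prod_cons, ← ih, pow_succ']
        rw [mul_assoc]
  rw [hexp, prod_map_sig]
  refine Par.ext (funext fun t => ?_) ?_
  · show ((ris (alternatingWord i i' (2 * M i i'))).count t : ZMod 2) = 0
    obtain ⟨k, hk⟩ := cs.count_ris_braid_even i i' t
    rw [hk]
    push_cast
    ring_nf
    rw [show ((2 : ZMod 2)) = 0 by decide]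
    ring
  · show π (alternatingWord i i' (2 * M i i')) = 1
    rw [cs.prod_alternatingWord_eq_mul_pow, if_pos (even_two_mul _), one_mul]
    have : 2 * M i i' / 2 = M i i' := by omega
    rw [this]
    exact cs.simple_mul_simple_pow i i'

/-- The parity homomorphism. -/
noncomputable def phi : W →* Par W := cs.lift ⟨cs.sig, cs.sig_liftable⟩

lemma phi_simple (i : B) : cs.phi (cs.simple i) = cs.sig i :=
  cs.lift_apply_simple cs.sig_liftable i

lemma phi_wordProd (ω : List B) :
    cs.phi (π ω) = ⟨fun t => ((ris ω).count t : ZMod 2), π ω⟩ := by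
  rw [← prod_map_sig, wordProd, map_list_prod, map_map]
  congr 1
  apply map_congr_left
  intro i _
  exact cs.phi_simple i

/-- The parity cocycle. -/
noncomputable def nw (w t : W) : ZMod 2 := (cs.phi w).f t

lemma phi_w (w : W) : (cs.phi w).w = w := by
  obtain ⟨ω, _, rfl⟩ := cs.exists_reduced_word' w
  rw [cs.phi_wordProd]

lemma nw_count {w : W} (ω : List B) (hω : π ω = w) (t : W) :
    cs.nw w t = ((ris ω).count t : ZMod 2) := by
  rw [nw, ← hω, cs.phi_wordProd]

lemma nw_mul (u v t : W) : cs.nw (u * v) t = cs.nw v t + cs.nw u (v * t * v⁻¹) := by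
  have := cs.phi.map_mul u v
  rw [nw, nw, nw, this]
  simp [cs.phi_w]

lemma nw_one (t : W) : cs.nw 1 t = 0 := by
  rw [nw, cs.phi.map_one]
  rfl

lemma nw_inv (u t : W) : cs.nw u⁻¹ t = cs.nw u (u⁻¹ * t * u) := by
  have h := cs.nw_mul u u⁻¹ t
  rw [mul_inv_cancel, cs.nw_one] at h
  have h2 : cs.nw u (u⁻¹ * t * u⁻¹⁻¹) = cs.nw u (u⁻¹ * t * u) := by rw [inv_inv]
  rw [h2] at h
  -- h : 0 = cs.nw u⁻¹ t + cs.nw u (u⁻¹ * t * u)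
  have : ∀ x y : ZMod 2, 0 = x + y → x = y := by decide
  exact this _ _ h

open Classical in
lemma nw_simple (i : B) (t : W) :
    cs.nw (cs.simple i) t = if t = cs.simple i then 1 else 0 := by
  rw [nw, cs.phi_simple]
  simp [sig]

lemma nw_reflection_self {t : W} (ht : cs.IsReflection t) : cs.nw t t = 1 := by
  obtain ⟨x, i, rfl⟩ := ht
  set t := x * cs.simple i * x⁻¹ with hts
  have h1 : cs.nw t t = cs.nw (cs.simple i * x⁻¹) t + cs.nw x (cs.simple i) := by
    have harg : (cs.simple i * x⁻¹) * t * (cs.simple i * x⁻¹)⁻¹ = cs.simple i := by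
      rw [hts]; group
    have := cs.nw_mul x (cs.simple i * x⁻¹) t
    rw [harg] at this
    rw [← mul_assoc] at this
    exact this
  have h2 : cs.nw (cs.simple i * x⁻¹) t = cs.nw x⁻¹ t + 1 := by
    have harg : x⁻¹ * t * x⁻¹⁻¹ = cs.simple i := by rw [hts]; group
    have := cs.nw_mul (cs.simple i) x⁻¹ t
    rw [harg, cs.nw_simple] at this
    rw [if_pos rfl] at this
    rw [this, add_comm]
  have h3 : cs.nw x⁻¹ t = cs.nw x (cs.simple i) := by
    rw [cs.nw_inv]
    congr 1
    rw [hts]; group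
  rw [h1, h2, h3]
  have : ∀ y : ZMod 2, y + 1 + y = 1 := by decide
  exact this _

lemma mul_mem_ris_eraseIdx {ω : List B} {t : W} (ht : t ∈ ris ω) :
    ∃ k < ω.length, π ω * t = π (ω.eraseIdx k) := by
  obtain ⟨k, hk, hkt⟩ := List.mem_iff_getElem.mp ht
  rw [cs.length_rightInvSeq] at hk
  refine ⟨k, hk, ?_⟩
  have := cs.wordProd_mul_getD_rightInvSeq ω k
  rw [getD_eq_getElem _ _ (by rw [cs.length_rightInvSeq]; exact hk)] at this
  rw [hkt] at this
  exact this

lemma isRightInversion_of_nw_eq_one {w t : W} (ht : cs.IsReflection t)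
    (h1 : cs.nw w t = 1) : cs.IsRightInversion w t := by
  obtain ⟨ω, hred, rfl⟩ := cs.exists_reduced_word' w
  have hmem : t ∈ ris ω := by
    by_contra hmem
    rw [cs.nw_count ω rfl, List.count_eq_zero_of_not_mem hmem] at h1
    exact absurd h1 (by decide)
  obtain ⟨k, hk, heq⟩ := cs.mul_mem_ris_eraseIdx hmem
  refine ⟨ht, ?_⟩
  rw [heq]
  calc ℓ (π (ω.eraseIdx k)) ≤ (ω.eraseIdx k).length := cs.length_wordProd_le _
    _ < ω.length := by rw [List.length_eraseIdx, if_pos hk]; omega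
    _ = ℓ (π ω) := hred.symm

lemma isRightInversion_iff_nw_eq_one {w t : W} (ht : cs.IsReflection t) :
    cs.IsRightInversion w t ↔ cs.nw w t = 1 := by
  refine ⟨fun h => ?_, cs.isRightInversion_of_nw_eq_one ht⟩
  by_contra hne
  have h0 : cs.nw w t = 0 := by
    have : ∀ x : ZMod 2, x ≠ 1 → x = 0 := by decide
    exact this _ hne
  have hwt : cs.nw (w * t) t = 1 := by
    have hmul := cs.nw_mul w t t
    have harg : t * t * t⁻¹ = t := by rw [ht.mul_self, one_mul]; exact ht.inv
    rw [harg, cs.nw_reflection_self ht, h0, add_zero] at hmul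
    exact hmul
  have hinv := cs.isRightInversion_of_nw_eq_one ht hwt
  have : w * t * t = w := by rw [mul_assoc, ht.mul_self, mul_one]
  rw [IsRightInversion, this] at hinv
  exact absurd h.2 (by omega)

/-- The (simple) exchange property. -/
lemma exchange_simple {w : W} {j : B} (hd : cs.IsRightDescent w j)
    {ω : List B} (hred : cs.IsReduced ω) (hw : π ω = w) :
    ∃ k < ω.length, w * cs.simple j = π (ω.eraseIdx k) := by
  have ht : cs.IsReflection (cs.simple j) := cs.isReflection_simple j
  have h1 : cs.nw w (cs.simple j) = 1 :=
    (cs.isRightInversion_iff_nw_eq_one ht).mp ⟨ht, hd⟩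
  have hmem : cs.simple j ∈ ris ω := by
    by_contra hmem
    rw [cs.nw_count ω hw, List.count_eq_zero_of_not_mem hmem] at h1
    exact absurd h1 (by decide)
  obtain ⟨k, hk, heq⟩ := cs.mul_mem_ris_eraseIdx hmem
  rw [hw] at heq
  exact ⟨k, hk, heq⟩

/-! ### Words in a subset of the generators -/

lemma wordProd_mem_closure {X : Set B} (ω : List B) (hω : ∀ b ∈ ω, b ∈ X) :
    π ω ∈ Subgroup.closure (cs.simple '' X) := by
  induction ω with
  | nil => rw [wordProd_nil]; exact one_mem _
  | cons i ω ih =>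
      rw [wordProd_cons]
      exact mul_mem (Subgroup.subset_closure ⟨i, hω i (mem_cons_self), rfl⟩)
        (ih fun b hb => hω b (mem_cons_of_mem _ hb))

lemma exists_word_of_mem_closure {X : Set B} {u : W}
    (hu : u ∈ Subgroup.closure (cs.simple '' X)) :
    ∃ ω : List B, (∀ b ∈ ω, b ∈ X) ∧ π ω = u := by
  induction hu using Subgroup.closure_induction with
  | mem x hx =>
      obtain ⟨i, hi, rfl⟩ := hx
      exact ⟨[i], by simpa using hi, by simp⟩
  | one => exact ⟨[], by simp, by simp⟩
  | mul x y _ _ hx hy =>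
      obtain ⟨ω₁, h1, rfl⟩ := hx
      obtain ⟨ω₂, h2, rfl⟩ := hy
      refine ⟨ω₁ ++ ω₂, ?_, by rw [wordProd_append]⟩
      intro b hb
      rcases mem_append.mp hb with h | h
      · exact h1 b h
      · exact h2 b h
  | inv x _ hx =>
      obtain ⟨ω, h1, rfl⟩ := hx
      exact ⟨ω.reverse, by simpa using h1, by rw [wordProd_reverse]⟩

lemma reduce_word {X : Set B} : ∀ n (ω : List B), ω.length = n → (∀ b ∈ ω, b ∈ X) →
    ∃ ω' : List B, cs.IsReduced ω' ∧ (∀ b ∈ ω', b ∈ X) ∧ π ω' = π ω := by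
  intro n
  induction n using Nat.strong_induction_on with
  | _ n IH =>
  intro ω hn hX
  classical
  by_cases hred : cs.IsReduced ω
  · exact ⟨ω, hred, hX, rfl⟩
  · have hω0 : ω ≠ [] := by
      rintro rfl
      exact hred (by simp [IsReduced])
    have hlenpos : 0 < ω.length := List.length_pos_iff.mpr hω0
    have hP : ∃ j, ¬ cs.IsReduced (ω.take (j+1)) := by
      refine ⟨ω.length - 1, ?_⟩
      have : ω.length - 1 + 1 = ω.length := by omega
      rwa [this, List.take_length]
    let j := Nat.find hP
    have hj : ¬ cs.IsReduced (ω.take (j+1)) := Nat.find_spec hP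
    have hjmin : ∀ k, k < j → cs.IsReduced (ω.take (k+1)) := fun k hk =>
      not_not.mp (Nat.find_min hP (show k < Nat.find hP from hk))
    have hjlt : j < ω.length := by
      by_contra hcon
      push_neg at hcon
      have h1 : ω.length - 1 < j := by omega
      have := hjmin (ω.length - 1) h1
      have h2 : ω.length - 1 + 1 = ω.length := by omega
      rw [h2, List.take_length] at this
      exact hred this
    have hjred : cs.IsReduced (ω.take j) := by
      rcases Nat.eq_zero_or_pos j with h0 | hpos
      · rw [h0]
        simp [IsReduced]
      · have := hjmin (j - 1) (by omega)
        have h2 : j - 1 + 1 = j := by omega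
        rwa [h2] at this
    have hj1 : j ≠ 0 := by
      rintro h0
      apply hj
      rw [h0]
      have : ω.take 1 = [ω[0]'hlenpos] := by
        rw [List.take_one]
        rw [List.head?_eq_head hω0]
        simp [List.head_eq_getElem]
      rw [this]
      simp [IsReduced, cs.length_simple]
    have htake : ω.take (j+1) = ω.take j ++ [ω[j]'hjlt] := by
      rw [List.take_succ]
      congr 1
      rw [List.getElem?_eq_getElem hjlt]
      rfl
    have hlentakej : (ω.take j).length = j := by
      rw [List.length_take]
      omega
    have hlentake : ℓ (π (ω.take j)) = j := by
      rw [hjred, hlentakej]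
    have hdesc : cs.IsRightDescent (π (ω.take j)) (ω[j]'hjlt) := by
      have hne : ℓ (π (ω.take j) * cs.simple (ω[j]'hjlt)) ≠ j + 1 := by
        intro hc
        apply hj
        show ℓ (π (ω.take (j+1))) = (ω.take (j+1)).length
        rw [htake, wordProd_append, wordProd_singleton, hc, List.length_append, hlentakej]
        rfl
      rcases cs.length_mul_simple (π (ω.take j)) (ω[j]'hjlt) with h | h
      · rw [hlentake] at h
        exact absurd h hne
      · rw [hlentake] at h
        rw [IsRightDescent, hlentake]
        omega
    obtain ⟨k, hk, herase⟩ := cs.exchange_simple hdesc hjred rfl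
    rw [hlentakej] at hk
    set ω' := ((ω.take j).eraseIdx k) ++ ω.drop (j+1) with hω'
    have hπ : π ω' = π ω := by
      rw [hω', wordProd_append, ← herase]
      conv_rhs => rw [← List.take_append_drop (j+1) ω]
      rw [wordProd_append, htake, wordProd_append, wordProd_singleton]
    have hlen' : ω'.length = ω.length - 2 := by
      rw [hω', List.length_append, List.length_eraseIdx, if_pos (by omega : k < (ω.take j).length),
        hlentakej, List.length_drop]
      omega
    have hX' : ∀ b ∈ ω', b ∈ X := by
      intro b hb
      rcases mem_append.mp hb with h | h
      · exact hX b ((List.take_sublist j ω).mem ((List.eraseIdx_sublist _ k).mem h))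
      · exact hX b ((List.drop_sublist (j+1) ω).mem h)
    obtain ⟨ω'', h1, h2, h3⟩ := IH (ω.length - 2) (by omega) ω' hlen' hX'
    exact ⟨ω'', h1, h2, h3.trans hπ⟩

lemma exists_reduced_word_over {X : Set B} {u : W}
    (hu : u ∈ Subgroup.closure (cs.simple '' X)) :
    ∃ ω : List B, cs.IsReduced ω ∧ (∀ b ∈ ω, b ∈ X) ∧ π ω = u := by
  obtain ⟨ω, hX, rfl⟩ := cs.exists_word_of_mem_closure hu
  exact cs.reduce_word ω.length ω rfl hX

/-! ### Richardson's theorem -/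

section Richardson

variable {v : W}

lemma isLeftDescent_iff_isRightDescent_of_inv (hvinv : v⁻¹ = v) (j : B) :
    cs.IsLeftDescent v j ↔ cs.IsRightDescent v j := by
  conv_lhs => rw [← hvinv]
  exact cs.isLeftDescent_inv_iff

/-- Step 1: a minimal-length involution in a conjugacy class commutes with the simple
reflections in its descent set. -/
lemma step1 (hvinv : v⁻¹ = v)
    (hmin : ∀ x : W, IsConj v x → cs.length v ≤ cs.length x)
    {j : B} (hdj : cs.IsRightDescent v j) :
    cs.simple j * v = v * cs.simple j := by
  have hdl : cs.IsLeftDescent v j := (cs.isLeftDescent_iff_isRightDescent_of_inv hvinv j).mpr hdj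
  have hlen : ℓ (cs.simple j * v) + 1 = ℓ v := by
    rcases cs.length_simple_mul v j with h | h
    · exact absurd hdl (by rw [IsLeftDescent, h]; omega)
    · exact h
  obtain ⟨ζ, hζred, hζ⟩ := cs.exists_reduced_word' (cs.simple j * v)
  have hω : π (j :: ζ) = v := by
    rw [wordProd_cons, ← hζ, simple_mul_simple_cancel_left]
  have hζlen : ζ.length = ℓ v - 1 := by
    rw [← hζred, ← hζ]
    omega
  have hred : cs.IsReduced (j :: ζ) := by
    show ℓ (π (j :: ζ)) = (j :: ζ).length
    rw [hω, List.length_cons, hζlen]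
    omega
  obtain ⟨k, hk, herase⟩ := cs.exchange_simple hdj hred hω
  match k with
  | 0 =>
      rw [show (j :: ζ).eraseIdx 0 = ζ from rfl, ← hζ] at herase
      exact herase.symm
  | (k+1) =>
      exfalso
      rw [show (j :: ζ).eraseIdx (k+1) = j :: ζ.eraseIdx k from rfl, wordProd_cons] at herase
      have hval : π (ζ.eraseIdx k) = cs.simple j * (v * cs.simple j) := by
        rw [herase, simple_mul_simple_cancel_left]
      have hconj : IsConj v (cs.simple j * (v * cs.simple j)) := by
        apply isConj_iff.mpr
        refine ⟨cs.simple j, ?_⟩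
        rw [inv_simple]
        group
      have hk' : k < ζ.length := by
        simpa using hk
      have hlen2 : ℓ (cs.simple j * (v * cs.simple j)) ≤ ℓ v - 2 := by
        rw [← hval]
        calc ℓ (π (ζ.eraseIdx k)) ≤ (ζ.eraseIdx k).length := cs.length_wordProd_le _
          _ = ζ.length - 1 := by rw [List.length_eraseIdx, if_pos hk']
          _ ≤ ℓ v - 2 := by omega
      have := hmin _ hconj
      omega

/-- The key length-additivity lemma for the parabolic subgroup generated by the
descent set of a minimal involution. -/
lemma length_add_of_mem_descent_closure (hv2 : v * v = 1)
    (hmin : ∀ x : W, IsConj v x → cs.length v ≤ cs.length x) :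
    ∀ n (u : W), u ∈ Subgroup.closure
        (cs.simple '' {i | cs.IsRightDescent v i}) → cs.length u = n →
      cs.length (v * u) + cs.length u = cs.length v := by
  have hvinv : v⁻¹ = v := inv_eq_of_mul_eq_one_right hv2
  set X : Set B := {i | cs.IsRightDescent v i} with hX
  set K := Subgroup.closure (cs.simple '' X) with hK
  have hcent : ∀ u ∈ K, v * u = u * v := by
    have hle : K ≤ Subgroup.centralizer {v} := by
      rw [hK, Subgroup.closure_le]
      rintro x ⟨i, hi, rfl⟩
      rw [SetLike.mem_coe, Subgroup.mem_centralizer_iff]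
      intro y hy
      rw [Set.mem_singleton_iff] at hy
      subst hy
      exact (cs.step1 hvinv hmin hi).symm
    intro u hu
    exact Subgroup.mem_centralizer_iff.mp (hle hu) v rfl
  intro n
  induction n using Nat.strong_induction_on with
  | _ n IH =>
  intro u huK hun
  obtain ⟨ω, hωred, hωX, hωu⟩ := cs.exists_reduced_word_over huK
  rcases Nat.eq_zero_or_pos n with h0 | hpos
  · have : u = 1 := by
      rw [← cs.length_eq_zero_iff, hun, h0]
    rw [this, mul_one, cs.length_one]
    omega
  · have hω0 : ω ≠ [] := by
      rintro rfl
      rw [← hωu] at hun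
      rw [wordProd_nil, cs.length_one] at hun
      omega
    set j := ω.getLast hω0 with hj
    set ω₁ := ω.dropLast with hω₁
    have hsplit : ω₁ ++ [j] = ω := List.dropLast_concat_getLast hω0
    have hω₁red : cs.IsReduced ω₁ := by
      rw [hω₁, List.dropLast_eq_take]
      exact hωred.take _
    set u₁ := π ω₁ with hu₁
    have hu₁K : u₁ ∈ K := by
      apply cs.wordProd_mem_closure
      intro b hb
      exact hωX b ((List.dropLast_sublist ω).mem hb)
    have hjX : j ∈ X := hωX j (List.getLast_mem hω0)
    have hu' : u = u₁ * cs.simple j := by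
      rw [hu₁, ← hωu, ← hsplit, wordProd_append, wordProd_singleton]
    have hlenu₁ : ℓ u₁ + 1 = n := by
      have h1 : ω.length = n := by rw [← hun, ← hωu, hωred]
      have h2 : ω₁.length = ω.length - 1 := by rw [hω₁, List.length_dropLast]
      have h3 : ℓ u₁ = ω₁.length := by rw [hu₁, hω₁red]
      have h4 : 1 ≤ ω.length := by
        rcases Nat.eq_zero_or_pos ω.length with hz | hz
        · exact absurd (List.length_eq_zero_iff.mp hz) hω0
        · omega
      omega
    have hIH : ℓ (v * u₁) + ℓ u₁ = ℓ v := IH (ℓ u₁) (by omega) u₁ hu₁K rfl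
    have hneq := cs.length_mul_simple_ne (v * u₁) j
    rcases cs.length_mul_simple (v * u₁) j with hcase | hcase
    · -- impossible case: derive a contradiction
      exfalso
      obtain ⟨ρ, hρred, hρX, hρ⟩ := cs.exists_reduced_word_over (inv_mem hu₁K : u₁⁻¹ ∈ K)
      obtain ⟨ζ, hζred, hζ⟩ := cs.exists_reduced_word' (u₁ * v)
      have hρlen : ρ.length = ℓ u₁ := by
        rw [← hρred, hρ, cs.length_inv]
      have hζlen : ζ.length = ℓ (v * u₁) := by
        rw [← hζred, ← hζ, hcent u₁ hu₁K]
      have hprod : π (ρ ++ ζ) = v := by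
        rw [wordProd_append, hρ, ← hζ, inv_mul_cancel_left]
      have hredall : cs.IsReduced (ρ ++ ζ) := by
        show ℓ (π (ρ ++ ζ)) = (ρ ++ ζ).length
        rw [hprod, List.length_append, hρlen, hζlen]
        omega
      obtain ⟨k, hk, herase⟩ := cs.exchange_simple hjX hredall hprod
      rcases lt_or_ge k ρ.length with hkρ | hkρ
      · rw [List.eraseIdx_append_of_lt_length hkρ, wordProd_append, ← hζ] at herase
        have hvsv : v * cs.simple j * v = cs.simple j := by
          rw [← cs.step1 hvinv hmin hjX]
          calc cs.simple j * v * v = cs.simple j * (v * v) := by rw [mul_assoc]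
            _ = cs.simple j := by rw [hv2, mul_one]
        have hval : π (ρ.eraseIdx k) = cs.simple j * u₁⁻¹ := by
          have h1 : π (ρ.eraseIdx k) = v * cs.simple j * (u₁ * v)⁻¹ := by
            rw [herase]
            group
          rw [h1, mul_inv_rev, hvinv, ← mul_assoc, hvsv]
        have hlen1 : ℓ (cs.simple j * u₁⁻¹) ≤ ℓ u₁ - 1 := by
          rw [← hval]
          calc ℓ (π (ρ.eraseIdx k)) ≤ (ρ.eraseIdx k).length := cs.length_wordProd_le _
            _ = ρ.length - 1 := by rw [List.length_eraseIdx, if_pos hkρ]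
            _ = ℓ u₁ - 1 := by rw [hρlen]
        have hlen2 : ℓ (cs.simple j * u₁⁻¹) = n := by
          have h1 : (cs.simple j * u₁⁻¹)⁻¹ = u₁ * cs.simple j := by
            rw [mul_inv_rev, inv_inv, inv_simple]
          rw [← cs.length_inv, h1, ← hu', hun]
        omega
      · rw [List.eraseIdx_append_of_length_le hkρ, wordProd_append, hρ] at herase
        have hval : π (ζ.eraseIdx (k - ρ.length)) = v * u := by
          have h1 : π (ζ.eraseIdx (k - ρ.length)) = u₁ * (v * cs.simple j) := by
            rw [herase]
            group
          rw [h1, ← mul_assoc, ← hcent u₁ hu₁K, hu', mul_assoc]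
        have hkζ : k - ρ.length < ζ.length := by
          rw [List.length_append] at hk
          omega
        have hlen1 : ℓ (v * u) ≤ ℓ (v * u₁) - 1 := by
          rw [← hval]
          calc ℓ (π (ζ.eraseIdx (k - ρ.length))) ≤ (ζ.eraseIdx (k - ρ.length)).length :=
              cs.length_wordProd_le _
            _ = ζ.length - 1 := by rw [List.length_eraseIdx, if_pos hkζ]
            _ = ℓ (v * u₁) - 1 := by rw [hζlen]
        have hlen2 : ℓ (v * u) = ℓ (v * u₁) + 1 := by
          rw [hu', ← mul_assoc]
          exact hcase
        omega
    · -- good case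
      have hvu : v * u = v * u₁ * cs.simple j := by rw [hu', mul_assoc]
      rw [hvu, hun]
      omega

end Richardson

end CoxeterSystem

/-- **Richardson's theorem.** Let `(W,S)` be a Coxeter system of finite rank and let
`w ∈ W` have order two. Then there is a subset `I` of `S` such that the standard
parabolic subgroup `⟨I⟩` is finite, `w` is conjugate in `W` to the longest element
`w_I` of `⟨I⟩`, and `w_I` is central in `⟨I⟩`. -/
theorem exists_finite_parabolic_longest_central {B W : Type*} [Group W] [Finite B]
    {M : CoxeterMatrix B} (cs : CoxeterSystem M W) (w : W) (hw : orderOf w = 2) :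
    ∃ I : Set B, ∃ wI ∈ Subgroup.closure (cs.simple '' I),
      (Subgroup.closure (cs.simple '' I) : Set W).Finite ∧
      (∀ u ∈ Subgroup.closure (cs.simple '' I), cs.length u ≤ cs.length wI) ∧
      IsConj w wI ∧
      ∀ u ∈ Subgroup.closure (cs.simple '' I), wI * u = u * wI := by
  classical
  have hw2 : w * w = 1 := by
    have := pow_orderOf_eq_one w
    rwa [hw, pow_two] at this
  -- pick a conjugate of minimal length
  have hne : {n : ℕ | ∃ x : W, IsConj w x ∧ cs.length x = n}.Nonempty :=
    ⟨cs.length w, w, IsConj.refl w, rfl⟩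
  obtain ⟨v, hconj, hlen⟩ := Nat.sInf_mem hne
  have hmin : ∀ x : W, IsConj v x → cs.length v ≤ cs.length x := by
    intro x hx
    rw [hlen]
    exact Nat.sInf_le ⟨x, hconj.trans hx, rfl⟩
  have hv2 : v * v = 1 := by
    obtain ⟨c, hc⟩ := isConj_iff.mp hconj
    rw [← hc]
    calc c * w * c⁻¹ * (c * w * c⁻¹) = c * (w * w) * c⁻¹ := by group
      _ = 1 := by rw [hw2]; group
  have hvinv : v⁻¹ = v := inv_eq_of_mul_eq_one_right hv2
  set X : Set B := {i | cs.IsRightDescent v i} with hX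
  set K := Subgroup.closure (cs.simple '' X) with hK
  have hcent : ∀ u ∈ K, v * u = u * v := by
    have hle : K ≤ Subgroup.centralizer {v} := by
      rw [hK, Subgroup.closure_le]
      rintro x ⟨i, hi, rfl⟩
      rw [SetLike.mem_coe, Subgroup.mem_centralizer_iff]
      intro y hy
      rw [Set.mem_singleton_iff] at hy
      subst hy
      exact (cs.step1 hvinv hmin hi).symm
    intro u hu
    exact Subgroup.mem_centralizer_iff.mp (hle hu) v rfl
  have hL1 : ∀ u ∈ K, cs.length (v * u) + cs.length u = cs.length v := fun u hu =>
    cs.length_add_of_mem_descent_closure hv2 hmin (cs.length u) u hu rfl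
  have hbound : ∀ u ∈ K, cs.length u ≤ cs.length v := by
    intro u hu
    have := hL1 u hu
    omega
  -- K is finite
  have hKfin : (K : Set W).Finite := by
    have hsub : (K : Set W) ⊆ (fun ω : List B => cs.wordProd ω) '' {ω | ω.length ≤ cs.length v} := by
      intro u hu
      obtain ⟨ω, hred, hXmem, hπ⟩ := cs.exists_reduced_word_over hu
      refine ⟨ω, ?_, hπ⟩
      have h1 : ω.length = cs.length u := by rw [← hred, hπ]
      rw [Set.mem_setOf_eq, h1]
      exact hbound u hu
    exact ((List.finite_length_le B (cs.length v)).image _).subset hsub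
  -- maximal-length element of K
  obtain ⟨u₀, hu₀K, hu₀max⟩ := hKfin.toFinset.exists_max_image (fun u => cs.length u)
    ⟨1, by rw [Set.Finite.mem_toFinset]; exact one_mem K⟩
  rw [Set.Finite.mem_toFinset] at hu₀K
  have hu₀max2 : ∀ u ∈ K, cs.length u ≤ cs.length u₀ := by
    intro u hu
    exact hu₀max u (by rwa [Set.Finite.mem_toFinset])
  -- key claim: v * u₀ = 1
  have hvu₀ : v * u₀ = 1 := by
    by_contra hx
    obtain ⟨j, hj⟩ := cs.exists_leftDescent_of_ne_one hx
    have hlvu₀ : cs.length (v * u₀) + cs.length u₀ = cs.length v := hL1 u₀ hu₀K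
    have hjlen : cs.length (cs.simple j * (v * u₀)) + 1 = cs.length (v * u₀) := by
      rcases cs.length_simple_mul (v * u₀) j with h | h
      · exact absurd hj (by rw [CoxeterSystem.IsLeftDescent, h]; omega)
      · exact h
    have hjX : j ∈ X := by
      have hlsv : cs.IsLeftDescent v j := by
        rw [CoxeterSystem.IsLeftDescent]
        have h1 : cs.simple j * v = (cs.simple j * (v * u₀)) * u₀⁻¹ := by group
        calc cs.length (cs.simple j * v)
            ≤ cs.length (cs.simple j * (v * u₀)) + cs.length u₀⁻¹ := by
              rw [h1]; exact cs.length_mul_le _ _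
          _ = cs.length (cs.simple j * (v * u₀)) + cs.length u₀ := by rw [cs.length_inv]
          _ < cs.length v := by omega
      exact (cs.isLeftDescent_iff_isRightDescent_of_inv hvinv j).mp hlsv
    have hsjK : cs.simple j * u₀ ∈ K :=
      mul_mem (Subgroup.subset_closure ⟨j, hjX, rfl⟩) hu₀K
    have heq : v * (cs.simple j * u₀) = cs.simple j * (v * u₀) := by
      rw [← mul_assoc, ← cs.step1 hvinv hmin hjX, mul_assoc]
    have hc1 : cs.length (v * (cs.simple j * u₀)) + cs.length (cs.simple j * u₀) = cs.length v :=
      hL1 _ hsjK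
    rw [heq] at hc1
    have := hu₀max2 _ hsjK
    omega
  have hvK : v ∈ K := by
    have hv : v = u₀⁻¹ := eq_inv_of_mul_eq_one_left hvu₀
    rw [hv]
    exact inv_mem hu₀K
  exact ⟨X, v, hvK, hKfin, hbound, hconj, hcent⟩
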